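/- arXiv:2401.05835 — 3 statements merged into one kernel-verified Lean document; each statement's English description precedes it below -/
import Mathlib

section
/- Suppose Cloud receives the transformed constraint data G̃ = G𝐑 and ẽ = W + Ox₀ − G𝐫, where G = col(I_{Nm}, −I_{Nm}, 𝒢, −𝒢), W's first block of Nm rows equals 𝟙_N ⊗ u_max, and the first Nm rows of O are zero. Then: (a) the first Nm rows of G̃ reveal 𝐑 exactly; and (b) from the first Nm rows ẽ₁ = 𝟙_N ⊗ u_max − 𝐫 of ẽ, multiplying by (L ⊗ I_m) with L = I_N − (1/N)𝟙_N𝟙_Nᵀ yields (L ⊗ I_m)𝐫 = −(L ⊗ I_m)ẽ₁, so Cloud recovers (L ⊗ I_m)𝐫. -/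
open Matrix
open scoped Kronecker

theorem stmt9 {N m p : ℕ} (hN : 0 < N)
    (R : Matrix (Fin N × Fin m) (Fin N × Fin m) ℝ) (hR : IsUnit R)
    (r : Fin N × Fin m → ℝ) (umax : Fin m → ℝ)
    (𝒢 : Matrix (Fin N × Fin p) (Fin N × Fin m) ℝ) :
    let G : Matrix ((Fin N × Fin m) ⊕ (Fin N × Fin m) ⊕ (Fin N × Fin p) ⊕ (Fin N × Fin p))
        (Fin N × Fin m) ℝ :=
      Matrix.of fun i j => match i with
        | Sum.inl i => (1 : Matrix (Fin N × Fin m) (Fin N × Fin m) ℝ) i j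
        | Sum.inr (Sum.inl i) => (-1 : Matrix (Fin N × Fin m) (Fin N × Fin m) ℝ) i j
        | Sum.inr (Sum.inr (Sum.inl i)) => 𝒢 i j
        | Sum.inr (Sum.inr (Sum.inr i)) => (-𝒢) i j
    let L : Matrix (Fin N) (Fin N) ℝ := 1 - (N : ℝ)⁻¹ • Matrix.of (fun _ _ => (1 : ℝ))
    let e₁ : Fin N × Fin m → ℝ := fun i => umax i.2 - r i
    (∀ i j, (G * R) (Sum.inl i) j = R i j) ∧
    (L ⊗ₖ (1 : Matrix (Fin m) (Fin m) ℝ)).mulVec r =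
      -((L ⊗ₖ (1 : Matrix (Fin m) (Fin m) ℝ)).mulVec e₁) := by
  intro G L e₁
  constructor
  · intro i j
    simp [G, Matrix.mul_apply, Matrix.one_apply]
  · have hzero : (L ⊗ₖ (1 : Matrix (Fin m) (Fin m) ℝ)).mulVec (fun i => umax i.2) = 0 := by
      funext i
      simp only [Matrix.mulVec, dotProduct, Matrix.kroneckerMap_apply,
        Fintype.sum_prod_type, Pi.zero_apply]
      have : ∀ j₁ : Fin N, ∑ j₂ : Fin m,
          L i.1 j₁ * (1 : Matrix (Fin m) (Fin m) ℝ) i.2 j₂ * umax j₂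
          = L i.1 j₁ * umax i.2 := by
        intro j₁
        rw [Finset.sum_eq_single i.2]
        · simp
        · intro b _ hb; simp [Matrix.one_apply, Ne.symm hb]
        · simp
      rw [Finset.sum_congr rfl fun j₁ _ => this j₁, ← Finset.sum_mul]
      have hL : ∑ j₁ : Fin N, L i.1 j₁ = 0 := by
        simp [L, Matrix.sub_apply, Matrix.one_apply, Finset.sum_sub_distrib,
          Finset.card_univ]
        field_simp
        norm_num
      rw [hL, zero_mul]
    have he : e₁ = (fun i => umax i.2) - r := rfl
    rw [he, Matrix.mulVec_sub, hzero, zero_sub, neg_neg]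
end

section
/- Let A ∈ ℝ^{n×n}, B ∈ ℝ^{n×m}, and let symmetric matrices ΔP, ΔQ be given by ΔP = X and ΔQ = X − AᵀXA for some symmetric X with XB = 0. With 𝒬̂ := bdiag(Q̂+ΔQ, …, Q̂+ΔQ, P̂+ΔP) replacing 𝒬 := bdiag(Q̂,…,Q̂,P̂) (N−1 copies of the Q-block), and with 𝒮 the block lower-triangular matrix whose (i,j) block is A^{i−j}B for i ≥ j (zero otherwise) and 𝒯 := col(A, A², …, A^N), suppose 𝒯ᵀΔ𝒬𝒮 = 0 where Δ𝒬 := bdiag(ΔQ,…,ΔQ,ΔP). Then also 𝒮ᵀΔ𝒬𝒮 = 0. -/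
open Matrix Finset

private lemma tel_sum (T : ℕ → ℝ) {a b : ℕ} (h : a ≤ b) :
    ∑ i ∈ Finset.Ico a b, (T i - T (i + 1)) = T a - T b := by
  induction b, h using Nat.le_induction with
  | base => simp
  | succ b hb ih => rw [Finset.sum_Ico_succ_top hb, ih]; ring

theorem stmt13 {n m N : ℕ} (hN : 0 < N)
    (A : Matrix (Fin n) (Fin n) ℝ) (hA : IsUnit A) (B : Matrix (Fin n) (Fin m) ℝ)
    (X : Matrix (Fin n) (Fin n) ℝ) (hX : X.IsSymm) (hXB : X * B = 0)
    (ΔP ΔQ : Matrix (Fin n) (Fin n) ℝ) (hP : ΔP = X) (hQ : ΔQ = X - Aᵀ * X * A) :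
    let 𝒮 : Matrix (Fin N × Fin n) (Fin N × Fin m) ℝ :=
      Matrix.of fun ia jb =>
        if (jb.1 : ℕ) ≤ (ia.1 : ℕ) then (A ^ ((ia.1 : ℕ) - (jb.1 : ℕ)) * B) ia.2 jb.2 else 0
    let 𝒯 : Matrix (Fin N × Fin n) (Fin n) ℝ :=
      Matrix.of fun ia b => (A ^ ((ia.1 : ℕ) + 1)) ia.2 b
    let Δ𝒬 : Matrix (Fin N × Fin n) (Fin N × Fin n) ℝ :=
      Matrix.of fun ia jb =>
        if ia.1 = jb.1 then (if (ia.1 : ℕ) = N - 1 then ΔP else ΔQ) ia.2 jb.2 else 0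
    𝒯ᵀ * Δ𝒬 * 𝒮 = 0 → 𝒮ᵀ * Δ𝒬 * 𝒮 = 0 := by
  intro 𝒮 𝒯 Δ𝒬 _
  have hBX : Bᵀ * X = 0 := by
    have h := congrArg Matrix.transpose hXB
    rwa [Matrix.transpose_mul, hX.eq, Matrix.transpose_zero] at h
  ext p q
  obtain ⟨j, bb⟩ := p
  obtain ⟨l, cc⟩ := q
  set D : ℕ → Matrix (Fin n) (Fin n) ℝ := fun i => if i = N - 1 then ΔP else ΔQ with hD
  set T : ℕ → ℝ := fun i =>
    ((A ^ (i - (j : ℕ)) * B)ᵀ * (X * (A ^ (i - (l : ℕ)) * B))) bb cc with hT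
  set G : ℕ → ℝ := fun i =>
    if (j : ℕ) ≤ i ∧ (l : ℕ) ≤ i then
      ((A ^ (i - (j : ℕ)) * B)ᵀ * (D i * (A ^ (i - (l : ℕ)) * B))) bb cc
    else 0 with hG
  have h1 : ∀ (i : Fin N) (a : Fin n),
      (Δ𝒬 * 𝒮) (i, a) (l, cc)
        = if (l : ℕ) ≤ (i : ℕ) then (D (i : ℕ) * (A ^ ((i : ℕ) - (l : ℕ)) * B)) a cc else 0 := by
    intro i a
    rw [Matrix.mul_apply, Fintype.sum_prod_type]
    simp only [𝒮, Δ𝒬, Matrix.of_apply, ite_mul, zero_mul, mul_ite, mul_zero]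
    rw [Finset.sum_comm]
    by_cases hl : (l : ℕ) ≤ (i : ℕ)
    · rw [if_pos hl, Matrix.mul_apply]
      refine Finset.sum_congr rfl fun y _ => ?_
      rw [Finset.sum_eq_single i (fun x _ hxi => by simp [Ne.symm hxi])
        (fun h => absurd (Finset.mem_univ i) h)]
      simp [hl, hD]
    · rw [if_neg hl]
      refine Finset.sum_eq_zero fun y _ => Finset.sum_eq_zero fun x _ => ?_
      by_cases hix : i = x
      · subst hix; simp [hl]
      · simp [hix]
  have h2 : (𝒮ᵀ * Δ𝒬 * 𝒮) (j, bb) (l, cc) = ∑ i : Fin N, G (i : ℕ) := by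
    rw [Matrix.mul_assoc, Matrix.mul_apply, Fintype.sum_prod_type]
    refine Finset.sum_congr rfl fun i _ => ?_
    simp only [Matrix.transpose_apply, h1]
    simp only [𝒮, Matrix.of_apply, ite_mul, zero_mul, mul_ite, mul_zero, hG]
    by_cases hj : (j : ℕ) ≤ (i : ℕ) <;> by_cases hl : (l : ℕ) ≤ (i : ℕ)
    · rw [if_pos (⟨hj, hl⟩ : (j:ℕ) ≤ (i:ℕ) ∧ (l:ℕ) ≤ (i:ℕ))]
      simp only [hj, hl, if_true]
      rw [Matrix.mul_apply]
      refine Finset.sum_congr rfl fun x _ => ?_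
      rw [Matrix.transpose_apply]
    · simp [hj, hl]
    · simp [hj, hl]
    · simp [hj, hl]
  rw [h2, Fin.sum_univ_eq_sum_range]
  set k := max (j : ℕ) (l : ℕ) with hk
  have hkN : k < N := max_lt j.isLt l.isLt
  rw [Finset.range_eq_Ico, ← Finset.sum_Ico_consecutive _ (Nat.zero_le k) hkN.le]
  have hzero : ∑ i ∈ Finset.Ico 0 k, G i = 0 := by
    refine Finset.sum_eq_zero fun i hi => ?_
    rw [Finset.mem_Ico] at hi
    exact if_neg (by omega)
  have hkN1 : k ≤ N - 1 := by omega
  have hsplit : ∑ i ∈ Finset.Ico k N, G i = ∑ i ∈ Finset.Ico k (N - 1), G i + G (N - 1) := by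
    rw [← Finset.sum_Ico_succ_top hkN1, Nat.sub_add_cancel hN]
  have hmid : ∑ i ∈ Finset.Ico k (N - 1), G i = T k - T (N - 1) := by
    rw [← tel_sum T hkN1]
    refine Finset.sum_congr rfl fun i hi => ?_
    rw [Finset.mem_Ico] at hi
    have hji : (j : ℕ) ≤ i := le_trans (le_max_left _ _) hi.1
    have hli : (l : ℕ) ≤ i := le_trans (le_max_right _ _) hi.1
    have hine : i ≠ N - 1 := by omega
    have e1 : (i + 1) - (j : ℕ) = (i - (j : ℕ)) + 1 := by omega
    have e2 : (i + 1) - (l : ℕ)  = (i - (l : ℕ)) + 1 := by omega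
    simp only [hG, hD, hT, e1, e2]
    rw [if_pos (⟨hji, hli⟩ : (j:ℕ) ≤ i ∧ (l:ℕ) ≤ i), if_neg hine, hQ]
    rw [← Matrix.sub_apply]
    congr 1
    rw [pow_succ' A (i - (j:ℕ)), pow_succ' A (i - (l:ℕ))]
    simp only [Matrix.transpose_mul, Matrix.mul_sub, Matrix.sub_mul, Matrix.mul_assoc]
  have hlast : G (N - 1) = T (N - 1) := by
    have hj1 : (j : ℕ) ≤ N - 1 := by omega
    have hl1 : (l : ℕ) ≤ N - 1 := by omega
    simp only [hG, hD, hT]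
    rw [if_pos (⟨hj1, hl1⟩ : (j:ℕ) ≤ N-1 ∧ (l:ℕ) ≤ N-1)]
    simp [hP]
  have hTk : T k = 0 := by
    rcases le_total (l : ℕ) (j : ℕ) with h | h
    · have hkj : k = (j : ℕ) := by rw [hk]; exact max_eq_left h
      simp only [hT, hkj]
      rw [Nat.sub_self, pow_zero, Matrix.one_mul, ← Matrix.mul_assoc, hBX, Matrix.zero_mul]
      simp
    · have hkl : k = (l : ℕ) := by rw [hk]; exact max_eq_right h
      simp only [hT, hkl]
      rw [Nat.sub_self, pow_zero, Matrix.one_mul, hXB, Matrix.mul_zero]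
      simp
  rw [hzero, hsplit, hmid, hlast, hTk]
  ring_nf
  simp
end

section
/- Let F ∈ ℝ^{n×Nm} have full row rank n, 𝐑 ∈ ℝ^{Nm×Nm} be invertible, A ∈ ℝ^{n×n}, and suppose data matrices satisfy ΔF̃₁ = Ã·ΔF̃₀ + B̃·ΔZ̃* with Ã = 𝐑ᵀFᵀA(Fᵀ)†𝐑^{−⊤}, B̃ = 𝐑ᵀFᵀB̄𝐑, and a full-rank factorization ΔF̃₀ = ΔF_b·E₀ with ΔF_b ∈ ℝ^{Nm×n} of full column rank, E₀ ∈ ℝ^{n×(I−2)} of full row rank, where additionally 𝐑ᵀFᵀ = ΔF_b·T for some invertible T ∈ ℝ^{n×n} and ΔF̃₁ = ΔF_b·E₁. If there exists Θ ∈ ℝ^{(I−2)×n} with E₀Θ = I_n and ΔZ̃*Θ = 0, then E₁Θ = TAT^{−1}; in particular E₁Θ is similar to A and has the same eigenvalues. -/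
open Matrix

lemma isUnit_of_rank_eq_card {k : ℕ} (M : Matrix (Fin k) (Fin k) ℝ) (h : M.rank = k) :
    IsUnit M := by
  rw [← Matrix.mulVec_surjective_iff_isUnit]
  have : LinearMap.range M.mulVecLin = ⊤ := by
    apply Submodule.eq_top_of_finrank_eq
    rw [Module.finrank_fintype_fun_eq_card, Fintype.card_fin]
    exact h
  intro v
  obtain ⟨w, hw⟩ := LinearMap.range_eq_top.mp this v
  exact ⟨w, hw⟩

lemma charpoly_conj_units {k : ℕ} (T A : Matrix (Fin k) (Fin k) ℝ) (hT : IsUnit T) :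
    (T * A * T⁻¹).charpoly = A.charpoly := by
  have hTT : T * T⁻¹ = 1 := mul_nonsing_inv T ((isUnit_iff_isUnit_det T).mp hT)
  have hC : charmatrix (T * A * T⁻¹) =
      T.map Polynomial.C * charmatrix A * T⁻¹.map Polynomial.C := by
    rw [charmatrix, charmatrix, mul_sub, sub_mul]
    congr 1
    · rw [← (Matrix.scalar_commute Polynomial.X (fun r => Commute.all _ r) (T.map Polynomial.C)).eq,
        mul_assoc, ← Matrix.map_mul, hTT, Matrix.map_one _ (by simp) (by simp), mul_one]
    · rw [RingHom.mapMatrix_apply, RingHom.mapMatrix_apply, Matrix.map_mul, Matrix.map_mul]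
  rw [Matrix.charpoly, Matrix.charpoly, hC, det_mul, det_mul, mul_comm, ← mul_assoc,
    ← det_mul, ← Matrix.map_mul]
  rw [show T⁻¹ * T = 1 from nonsing_inv_mul T ((isUnit_iff_isUnit_det T).mp hT),
    Matrix.map_one _ (by simp) (by simp), det_one, one_mul]

theorem stmt18 {n m N s : ℕ} (hN : 0 < N)
    (A : Matrix (Fin n) (Fin n) ℝ) (B : Matrix (Fin n) (Fin m) ℝ)
    (F : Matrix (Fin n) (Fin N × Fin m) ℝ) (hF : F.rank = n)
    (R : Matrix (Fin N × Fin m) (Fin N × Fin m) ℝ) (hR : IsUnit R)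
    (ΔF0 ΔF1 ΔZ : Matrix (Fin N × Fin m) (Fin s) ℝ)
    (ΔFb : Matrix (Fin N × Fin m) (Fin n) ℝ) (hΔFb : ΔFb.rank = n)
    (E0 E1 : Matrix (Fin n) (Fin s) ℝ) (hE0 : E0.rank = n)
    (T : Matrix (Fin n) (Fin n) ℝ) (hT : IsUnit T)
    (hfac0 : ΔF0 = ΔFb * E0)
    (hRF : Rᵀ * Fᵀ = ΔFb * T)
    (hfac1 : ΔF1 = ΔFb * E1)
    (Bbar : Matrix (Fin n) (Fin N × Fin m) ℝ)
    (hBbar : Bbar = Matrix.of fun i jb => if (jb.1 : ℕ) = 0 then B i jb.2 else 0)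
    (hdata : ΔF1 = (Rᵀ * Fᵀ * A * ((F * Fᵀ)⁻¹ * F) * (Rᵀ)⁻¹) * ΔF0
        + (Rᵀ * Fᵀ * Bbar * R) * ΔZ)
    (Θ : Matrix (Fin s) (Fin n) ℝ) (hΘ0 : E0 * Θ = 1) (hΘZ : ΔZ * Θ = 0) :
    E1 * Θ = T * A * T⁻¹ ∧ (E1 * Θ).charpoly = A.charpoly := by
  -- F * Fᵀ is invertible
  have hFFT : IsUnit (F * Fᵀ) := by
    apply isUnit_of_rank_eq_card
    rw [Matrix.rank_self_mul_transpose]; exact hF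
  -- ΔFbᵀ * ΔFb is invertible
  have hGram : IsUnit (ΔFbᵀ * ΔFb) := by
    apply isUnit_of_rank_eq_card
    rw [Matrix.rank_transpose_mul_self]; exact hΔFb
  have hRT : IsUnit Rᵀ := (Matrix.isUnit_transpose (A := R)).mpr hR
  have hRTinv : (Rᵀ)⁻¹ * Rᵀ = 1 := nonsing_inv_mul _ ((isUnit_iff_isUnit_det _).mp hRT)
  have hFinv : (F * Fᵀ)⁻¹ * (F * Fᵀ) = 1 := nonsing_inv_mul _ ((isUnit_iff_isUnit_det _).mp hFFT)
  have hTinv : T * T⁻¹ = 1 := mul_nonsing_inv _ ((isUnit_iff_isUnit_det _).mp hT)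
  -- key: multiply hdata by Θ
  have key : ΔFb * (E1 * Θ) = ΔFb * (T * A * T⁻¹) := by
    have h1 : ΔF1 * Θ = ΔFb * (E1 * Θ) := by rw [hfac1, Matrix.mul_assoc]
    have h2 : (Rᵀ)⁻¹ * ΔFb = Fᵀ * T⁻¹ := by
      have : ΔFb = Rᵀ * Fᵀ * T⁻¹ := by
        rw [hRF, Matrix.mul_assoc, hTinv, Matrix.mul_one]
      rw [this, ← Matrix.mul_assoc, ← Matrix.mul_assoc, hRTinv, Matrix.one_mul]
    calc ΔFb * (E1 * Θ) = ΔF1 * Θ := h1.symm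
      _ = (Rᵀ * Fᵀ * A * ((F * Fᵀ)⁻¹ * F) * (Rᵀ)⁻¹) * (ΔF0 * Θ)
          + (Rᵀ * Fᵀ * Bbar * R) * (ΔZ * Θ) := by
            rw [hdata, Matrix.add_mul]; simp only [Matrix.mul_assoc]
      _ = (Rᵀ * Fᵀ * A * ((F * Fᵀ)⁻¹ * F) * (Rᵀ)⁻¹) * ΔFb := by
            rw [hΘZ, Matrix.mul_zero, add_zero, hfac0, Matrix.mul_assoc ΔFb, hΘ0,
              Matrix.mul_one]
      _ = ΔFb * (T * A * T⁻¹) := by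
            rw [Matrix.mul_assoc _ _ ΔFb, h2, hRF]
            calc ΔFb * T * A * ((F * Fᵀ)⁻¹ * F) * (Fᵀ * T⁻¹)
                = ΔFb * (T * A * ((F * Fᵀ)⁻¹ * (F * Fᵀ)) * T⁻¹) := by
                  simp only [Matrix.mul_assoc]
              _ = ΔFb * (T * A * T⁻¹) := by rw [hFinv, Matrix.mul_one]
  -- cancel ΔFb on the left
  have hcancel : E1 * Θ = T * A * T⁻¹ := by
    have := congrArg (fun M => (ΔFbᵀ * ΔFb)⁻¹ * (ΔFbᵀ * M)) key
    simpa only [← Matrix.mul_assoc, nonsing_inv_mul _ ((isUnit_iff_isUnit_det _).mp hGram),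
      Matrix.one_mul, Matrix.mul_assoc ((ΔFbᵀ * ΔFb)⁻¹)] using this
  refine ⟨hcancel, ?_⟩
  rw [hcancel]
  exact charpoly_conj_units T A hT
end
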